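/- Let F_k ⋊ ℤ = ⟨s₁, …, s_k, f | f⁻¹ s_k f = s_k; f⁻¹ s_i f = s_i s_{i+1} for i < k⟩. For every natural number n there exists a positive word w_n in the letters s₁, …, s_k such that w_n = f⁻ⁿ s₁ⁿ fⁿ in F_k ⋊ ℤ. -/

import Mathlib

/-- The defining relators of `F_k ⋊ ℤ = ⟨s₁, …, s_k, f ∣ f⁻¹ s_k f = s_k;
f⁻¹ s_i f = s_i s_{i+1} for i < k⟩`; `Sum.inl i` is `s_{i+1}` and `Sum.inr ()` is `f`. -/
def rels13 (k : ℕ) : Set (FreeGroup (Fin k ⊕ Unit)) :=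
  {x | ∃ i : Fin k,
    x = (FreeGroup.of (Sum.inr ()))⁻¹ * FreeGroup.of (Sum.inl i) * FreeGroup.of (Sum.inr ()) *
      (if h : (i : ℕ) + 1 < k then
          FreeGroup.of (Sum.inl i) * FreeGroup.of (Sum.inl ⟨(i : ℕ) + 1, h⟩)
        else FreeGroup.of (Sum.inl i))⁻¹}

private def wl13 (k : ℕ) (i : Fin k) : List (Fin k) :=
  if h : (i : ℕ) + 1 < k then [i, ⟨(i : ℕ) + 1, h⟩] else [i]

private lemma rel13 (k : ℕ) (i : Fin k) :
    ((PresentedGroup.of (Sum.inr ()) : PresentedGroup (rels13 k)))⁻¹ *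
      PresentedGroup.of (Sum.inl i) * PresentedGroup.of (Sum.inr ()) =
    ((wl13 k i).map fun j => (PresentedGroup.of (Sum.inl j) : PresentedGroup (rels13 k))).prod := by
  have hr : ((FreeGroup.of (Sum.inr ()))⁻¹ * FreeGroup.of (Sum.inl i) * FreeGroup.of (Sum.inr ()) *
      (if h : (i : ℕ) + 1 < k then
          FreeGroup.of (Sum.inl i) * FreeGroup.of (Sum.inl ⟨(i : ℕ) + 1, h⟩)
        else FreeGroup.of (Sum.inl i))⁻¹) ∈ rels13 k := ⟨i, rfl⟩
  have h1 : PresentedGroup.mk (rels13 k)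
      ((FreeGroup.of (Sum.inr ()))⁻¹ * FreeGroup.of (Sum.inl i) * FreeGroup.of (Sum.inr ()) *
      (if h : (i : ℕ) + 1 < k then
          FreeGroup.of (Sum.inl i) * FreeGroup.of (Sum.inl ⟨(i : ℕ) + 1, h⟩)
        else FreeGroup.of (Sum.inl i))⁻¹) = 1 :=
    (QuotientGroup.eq_one_iff _).2 (Subgroup.subset_normalClosure hr)
  simp only [map_mul, map_inv] at h1
  have h2 := mul_eq_one_iff_eq_inv.1 h1
  rw [inv_inv] at h2
  unfold wl13 PresentedGroup.of
  split_ifs with h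
  · rw [h2, dif_pos h, map_mul]
    simp only [List.map_cons, List.map_nil, List.prod_cons, List.prod_nil, mul_one]
  · rw [h2, dif_neg h]
    simp only [List.map_cons, List.map_nil, List.prod_cons, List.prod_nil, mul_one]

private lemma conj13 (k : ℕ) (w : List (Fin k)) :
    ((PresentedGroup.of (Sum.inr ()) : PresentedGroup (rels13 k)))⁻¹ *
      (w.map fun j => (PresentedGroup.of (Sum.inl j) : PresentedGroup (rels13 k))).prod *
      PresentedGroup.of (Sum.inr ()) =
    ((w.flatMap (wl13 k)).map fun j =>
      (PresentedGroup.of (Sum.inl j) : PresentedGroup (rels13 k))).prod := by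
  induction w with
  | nil => simp
  | cons a t ih =>
    simp only [List.map_cons, List.prod_cons, List.flatMap_cons, List.map_append, List.prod_append]
    rw [← rel13 k a, ← ih]
    group

theorem stmt13 (k : ℕ) (hk : 1 ≤ k) (n : ℕ) :
    ∃ w : List (Fin k),
      (w.map fun i => (PresentedGroup.of (Sum.inl i) : PresentedGroup (rels13 k))).prod
        = ((PresentedGroup.of (Sum.inr ()) : PresentedGroup (rels13 k)) ^ n)⁻¹ *
            (PresentedGroup.of (Sum.inl ⟨0, hk⟩) : PresentedGroup (rels13 k)) ^ n *
            (PresentedGroup.of (Sum.inr ()) : PresentedGroup (rels13 k)) ^ n := by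
  set f : PresentedGroup (rels13 k) := PresentedGroup.of (Sum.inr ()) with hf
  -- first: f⁻ⁿ s₁ fⁿ is a positive word
  have key : ∀ m : ℕ, ∃ v : List (Fin k),
      (v.map fun i => (PresentedGroup.of (Sum.inl i) : PresentedGroup (rels13 k))).prod
        = (f ^ m)⁻¹ * PresentedGroup.of (Sum.inl ⟨0, hk⟩) * f ^ m := by
    intro m
    induction m with
    | zero => exact ⟨[⟨0, hk⟩], by simp⟩
    | succ m ih =>
      obtain ⟨v, hv⟩ := ih
      refine ⟨v.flatMap (wl13 k), ?_⟩
      rw [← conj13 k v, hv, pow_succ]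
      rw [← hf]
      group
  obtain ⟨v, hv⟩ := key n
  refine ⟨List.flatten (List.replicate n v), ?_⟩
  rw [List.map_flatten, List.prod_flatten, List.map_replicate, List.map_replicate,
    List.prod_replicate, hv]
  have : (f ^ n)⁻¹ * PresentedGroup.of (Sum.inl ⟨0, hk⟩) * f ^ n
      = (f ^ n)⁻¹ * PresentedGroup.of (Sum.inl ⟨0, hk⟩) * ((f ^ n)⁻¹)⁻¹ := by rw [inv_inv]
  rw [this, conj_pow, inv_inv]
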